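/- For all natural numbers n and m with 0 < m < n, the last code word C_{n,m}[C(n,m) − 1] and the first code word C_{n,m}[0] differ in exactly two bit positions (their Hamming distance is 2). -/

import Mathlib

/-- The Gray-style code `C_{n,m}`: a list of binary strings (lists of Booleans,
`true` = 1, `false` = 0).  `C_{0,0}` is the one-element list containing the empty
string, `C_{n,0} = [0^n]`, `C_{n,n} = [1^n]` for `n > 0`, and for `0 < m < n`,
`C_{n,m}` is the concatenation of the list obtained by prepending `0` to every
string of `C_{n-1,m}` with the reverse of the list obtained by prepending `1` to
every string of `C_{n-1,m-1}`. -/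
def grayCode : ℕ → ℕ → List (List Bool)
  | 0, _ => [[]]
  | n + 1, 0 => [List.replicate (n + 1) false]
  | n + 1, m + 1 =>
    if m + 1 = n + 1 then [List.replicate (n + 1) true]
    else (grayCode n (m + 1)).map (List.cons false) ++
      ((grayCode n m).map (List.cons true)).reverse


/-- The Hamming distance between two (equal-length) binary strings: the number of
positions at which they differ. -/
def listHammingDist : List Bool → List Bool → ℕ
  | a :: as, b :: bs => (if a = b then 0 else 1) + listHammingDist as bs
  | _, _ => 0

lemma hamming_cons (a b : Bool) (as bs : List Bool) :
    listHammingDist (a :: as) (b :: bs) = (if a = b then 0 else 1) + listHammingDist as bs := rfl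

lemma hamming_self : ∀ l : List Bool, listHammingDist l l = 0
  | [] => rfl
  | a :: as => by simp [hamming_cons, hamming_self as]

lemma hamming_comm : ∀ x y : List Bool, listHammingDist x y = listHammingDist y x
  | a :: as, b :: bs => by
      rw [hamming_cons, hamming_cons, hamming_comm as bs]
      by_cases h : a = b <;> simp [h, Ne.symm, eq_comm]
  | [], [] => rfl
  | [], _ :: _ => rfl
  | _ :: _, [] => rfl

lemma hamming_key : ∀ a m : ℕ, listHammingDist (List.replicate a false ++ List.replicate (m+1) true)
    (List.replicate (a+1) false ++ List.replicate m true) = 1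
  | 0, m => by
      simp [List.replicate_succ, hamming_cons, hamming_self]
  | a+1, m => by
      have h := hamming_key a m
      simp only [List.replicate_succ, List.cons_append, hamming_cons] at h ⊢
      simpa using h

lemma grayCode_length : ∀ n m, m ≤ n → (grayCode n m).length = n.choose m := by
  intro n
  induction n with
  | zero => intro m hm; interval_cases m; simp [grayCode]
  | succ n ih =>
    intro m hm
    match m with
    | 0 => simp [grayCode]
    | m + 1 =>
      by_cases h : m + 1 = n + 1
      · simp [grayCode, h, Nat.choose_self]
      · have hmn : m + 1 ≤ n := by omega
        rw [grayCode, if_neg h]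
        simp [grayCode, h, ih _ hmn, ih _ (by omega : m ≤ n), Nat.choose_succ_succ]
        omega

lemma grayCode_ne_nil (n m : ℕ) (h : m ≤ n) : grayCode n m ≠ [] := by
  intro hc
  have h1 := grayCode_length n m h
  rw [hc] at h1
  simp at h1
  have := Nat.choose_pos h
  omega

lemma grayCode_head : ∀ n m, m ≤ n → (grayCode n m).getD 0 [] =
    List.replicate (n - m) false ++ List.replicate m true := by
  intro n
  induction n with
  | zero => intro m hm; interval_cases m; simp [grayCode]
  | succ n ih =>
    intro m hm
    match m with
    | 0 => simp [grayCode]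
    | m + 1 =>
      by_cases h : m + 1 = n + 1
      · simp [grayCode, h]
      · have hmn : m + 1 ≤ n := by omega
        obtain ⟨a, as, hgc⟩ := List.exists_cons_of_ne_nil (grayCode_ne_nil n (m+1) hmn)
        have ha : a = List.replicate (n - (m+1)) false ++ List.replicate (m+1) true := by
          have := ih (m+1) hmn
          rw [hgc] at this
          simpa using this
        have hrep : n + 1 - (m + 1) = (n - (m+1)) + 1 := by omega
        rw [grayCode, if_neg h]
        simp [grayCode, h, hgc, ha, hrep, List.replicate_succ]

lemma getD_last {α : Type*} (l : List α) (h : l ≠ []) (d : α) :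
    l.getD (l.length - 1) d = l.getLast h := by
  rw [List.getLast_eq_getElem]
  rw [List.getD_eq_getElem]


/-- For all natural numbers `n` and `m` with `0 < m < n`, the last code word
`C_{n,m}[C(n,m) - 1]` and the first code word `C_{n,m}[0]` differ in exactly two
bit positions (Hamming distance `2`). -/
theorem grayCode_wraparound_hamming (n m : ℕ) (hm : 0 < m) (hmn : m < n) :
    listHammingDist ((grayCode n m).getD (n.choose m - 1) [])
      ((grayCode n m).getD 0 []) = 2 := by
  obtain ⟨n, rfl⟩ : ∃ n', n = n' + 1 := ⟨n - 1, by omega⟩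
  obtain ⟨m, rfl⟩ : ∃ m', m = m' + 1 := ⟨m - 1, by omega⟩
  have hne : m + 1 ≠ n + 1 := by omega
  have hmn' : m + 1 ≤ n := by omega
  have hlen := grayCode_length (n+1) (m+1) (le_of_lt hmn)
  have hnenil : grayCode (n+1) (m+1) ≠ [] := grayCode_ne_nil _ _ (le_of_lt hmn)
  rw [← hlen, getD_last _ hnenil, grayCode_head (n+1) (m+1) (le_of_lt hmn)]
  obtain ⟨a, as, hgc⟩ := List.exists_cons_of_ne_nil (grayCode_ne_nil n m (by omega))
  have ha : a = List.replicate (n - m) false ++ List.replicate m true := by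
    have := grayCode_head n m (by omega)
    rw [hgc] at this; simpa using this
  have hunf : grayCode (n+1) (m+1) = (grayCode n (m + 1)).map (List.cons false) ++
      ((grayCode n m).map (List.cons true)).reverse := by
    rw [grayCode, if_neg hne]
  have hrevne : ((grayCode n m).map (List.cons true)).reverse ≠ [] := by simp [hgc]
  have hX : (grayCode n (m + 1)).map (List.cons false) ++
      ((grayCode n m).map (List.cons true)).reverse ≠ [] := by simp [hgc]
  have hlast : (grayCode (n+1) (m+1)).getLast hnenil
      = true :: (List.replicate (n - m) false ++ List.replicate m true) := by
    rw [List.getLast_congr hnenil hX hunf, List.getLast_append_of_ne_nil _ hrevne]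
    have h3 : ((grayCode n m).map (List.cons true)).reverse
        = (as.map (List.cons true)).reverse ++ [true :: a] := by
      rw [hgc]; simp
    rw [List.getLast_congr hrevne (by simp) h3, List.getLast_append_singleton, ha]
  rw [hlast]
  obtain ⟨b, hb⟩ : ∃ b, n - m = b + 1 := ⟨n - m - 1, by omega⟩
  have e1 : n + 1 - (m + 1) = b + 1 := by omega
  have e2 : List.replicate (b+1) false ++ List.replicate (m+1) true
      = false :: (List.replicate b false ++ List.replicate (m+1) true) := by
    simp [List.replicate_succ]
  rw [e1, hb, e2, hamming_cons, hamming_comm, hamming_key b m]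
  simp
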